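/- arXiv:2208.00652 — 7 statements merged into one kernel-verified Lean document; each statement's English description precedes it below -/
import Mathlib

section
/- Let n, t be nonnegative integers with t ≥ 1 and n sufficiently large (n ≥ 100(t+1)^3 suffices). Define f(x1,x2,x3) = x1·x2·x3 + t·(x1(x1−1)/2 + x2(x2−1)/2 + x3(x3−1)/2) + C(t,3) on the domain D = {(x1,x2,x3) ∈ ℝ^3 : x1,x2,x3 ≥ 0, x1+x2+x3 = n−t}. Then the maximum of f over D is attained exactly at x1 = x2 = x3 = (n−t)/3. -/
/-- The function `f_{n,t}` counting hyperedges of the almost extremal construction. -/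
noncomputable def fnt (t : ℝ) (x1 x2 x3 : ℝ) : ℝ :=
  x1 * x2 * x3 + t * (x1 * (x1 - 1) / 2 + x2 * (x2 - 1) / 2 + x3 * (x3 - 1) / 2)
    + t * (t - 1) * (t - 2) / 6

lemma cube_aux (s a b c : ℝ) (h : a + b + c = 0) (ha : -s/3 ≤ a) (hb : -s/3 ≤ b)
    (hc : -s/3 ≤ c) : a*b*c ≤ (a^2+b^2+c^2)*s/9 := by
  have hc' : c = -a - b := by linarith
  subst hc'
  nlinarith [sq_nonneg (a-b), sq_nonneg (a+b), sq_nonneg (a+2*b), sq_nonneg (2*a+b),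
    mul_nonneg (by linarith : (0:ℝ) ≤ a + s/3) (by linarith : (0:ℝ) ≤ b + s/3),
    mul_nonneg (mul_nonneg (by linarith : (0:ℝ) ≤ a + s/3) (by linarith : (0:ℝ) ≤ b + s/3)) (by linarith : (0:ℝ) ≤ -a-b + s/3),
    sq_nonneg (a*b), sq_nonneg s]

lemma key_identity (t s x1 x2 x3 : ℝ) (hsum : x1 + x2 + x3 = s) :
    fnt t (s/3) (s/3) (s/3) - fnt t x1 x2 x3
      = ((x1-s/3)^2+(x2-s/3)^2+(x3-s/3)^2)*(s-3*t)/6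
        - (x1-s/3)*(x2-s/3)*(x3-s/3) := by
  have h3 : x3 = s - x1 - x2 := by linarith
  subst h3
  unfold fnt
  ring

lemma main_aux (t s x1 x2 x3 : ℝ) (ht : 1 ≤ t) (hst : 9 * t < s)
    (hx1 : 0 ≤ x1) (hx2 : 0 ≤ x2) (hx3 : 0 ≤ x3) (hsum : x1 + x2 + x3 = s) :
    fnt t x1 x2 x3 ≤ fnt t (s/3) (s/3) (s/3) ∧
      (fnt t x1 x2 x3 = fnt t (s/3) (s/3) (s/3) →
        x1 = s/3 ∧ x2 = s/3 ∧ x3 = s/3) := by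
  obtain ⟨a, hadef⟩ : ∃ a : ℝ, a = x1 - s/3 := ⟨_, rfl⟩
  obtain ⟨b, hbdef⟩ : ∃ b : ℝ, b = x2 - s/3 := ⟨_, rfl⟩
  obtain ⟨c, hcdef⟩ : ∃ c : ℝ, c = x3 - s/3 := ⟨_, rfl⟩
  have habc : a + b + c = 0 := by rw [hadef, hbdef, hcdef]; linarith
  have ha : -s/3 ≤ a := by rw [hadef]; linarith
  have hb : -s/3 ≤ b := by rw [hbdef]; linarith
  have hc : -s/3 ≤ c := by rw [hcdef]; linarith
  have hkey : fnt t (s/3) (s/3) (s/3) - fnt t x1 x2 x3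
      = (a^2+b^2+c^2)*(s-3*t)/6 - a*b*c := by
    rw [hadef, hbdef, hcdef]; exact key_identity t s x1 x2 x3 hsum
  have hcube : a*b*c ≤ (a^2+b^2+c^2)*s/9 := cube_aux s a b c habc ha hb hc
  have hq : 0 ≤ a^2+b^2+c^2 := by positivity
  have hlow : (a^2+b^2+c^2)*(s-9*t)/18 ≤ fnt t (s/3) (s/3) (s/3) - fnt t x1 x2 x3 := by
    rw [hkey]; nlinarith
  constructor
  · nlinarith
  · intro heq
    have h0 : (a^2+b^2+c^2)*(s-9*t)/18 ≤ 0 := by rw [heq] at hlow; linarith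
    have hq0 : a^2+b^2+c^2 = 0 := by
      by_contra hne
      have hpos : 0 < a^2+b^2+c^2 := lt_of_le_of_ne hq (Ne.symm hne)
      have hmul := mul_pos hpos (by linarith : (0:ℝ) < s - 9*t)
      linarith
    have h1 := sq_nonneg a
    have h2 := sq_nonneg b
    have h3 := sq_nonneg c
    have ha0 : a = 0 := by
      have : a^2 = 0 := by linarith
      exact pow_eq_zero_iff (two_ne_zero) |>.mp this
    have hb0 : b = 0 := by
      have : b^2 = 0 := by linarith
      exact pow_eq_zero_iff (two_ne_zero) |>.mp this
    have hc0 : c = 0 := by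
      have : c^2 = 0 := by linarith
      exact pow_eq_zero_iff (two_ne_zero) |>.mp this
    rw [hadef] at ha0; rw [hbdef] at hb0; rw [hcdef] at hc0
    exact ⟨by linarith, by linarith, by linarith⟩

/-- For `t ≥ 1` and `n ≥ 100(t+1)^3`, the maximum of `f_{n,t}` over the simplex
`{x1,x2,x3 ≥ 0, x1+x2+x3 = n−t}` is attained exactly at `x1 = x2 = x3 = (n−t)/3`. -/
theorem stmt2 (n t : ℕ) (ht : 1 ≤ t) (hn : 100 * (t + 1) ^ 3 ≤ n)
    (x1 x2 x3 : ℝ) (hx1 : 0 ≤ x1) (hx2 : 0 ≤ x2) (hx3 : 0 ≤ x3)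
    (hsum : x1 + x2 + x3 = (n : ℝ) - t) :
    fnt t x1 x2 x3 ≤ fnt t (((n : ℝ) - t) / 3) (((n : ℝ) - t) / 3) (((n : ℝ) - t) / 3) ∧
      (fnt t x1 x2 x3 = fnt t (((n : ℝ) - t) / 3) (((n : ℝ) - t) / 3) (((n : ℝ) - t) / 3) →
        x1 = ((n : ℝ) - t) / 3 ∧ x2 = ((n : ℝ) - t) / 3 ∧ x3 = ((n : ℝ) - t) / 3) := by
  have htR : (1:ℝ) ≤ (t:ℝ) := by exact_mod_cast ht
  have hnR : 100 * ((t:ℝ) + 1) ^ 3 ≤ (n:ℝ) := by exact_mod_cast hn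
  have hst : 9 * (t:ℝ) < (n:ℝ) - t := by nlinarith [sq_nonneg ((t:ℝ)+1)]
  exact main_aux t ((n:ℝ) - t) x1 x2 x3 htR hst hx1 hx2 hx3 hsum
end

section
/- Let H be an F_5^t-free 3-uniform hypergraph on vertex set [n]. Suppose x, x' are vertices with codegree d(x,x') ≥ t+1, and S, T ⊆ [n] are disjoint vertex sets. Then d_{S,T}(x) + d_{S,T}(x') ≤ |S|·|T| + (t+3)·n, where d_{S,T}(v) is the number of pairs {y,z} with y ∈ S, z ∈ T, and {v,y,z} a hyperedge. -/
lemma card3_ne {α : Type*} [DecidableEq α] {a b c : α}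
    (h : ({a, b, c} : Finset α).card = 3) : a ≠ b ∧ a ≠ c ∧ b ≠ c := by
  refine ⟨?_, ?_, ?_⟩
  · rintro rfl
    rw [Finset.insert_idem] at h
    have := Finset.card_insert_le a ({c} : Finset α)
    simp at this; omega
  · rintro rfl
    have hs := Finset.card_le_card (s := ({a, b, a} : Finset α)) (t := {a, b})
      (by intro u; simp; try tauto)
    have := Finset.card_insert_le a ({b} : Finset α)
    simp at this; omega
  · rintro rfl
    have hs := Finset.card_le_card (s := ({a, b, b} : Finset α)) (t := {a, b})
      (by intro u; simp; try tauto)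
    have := Finset.card_insert_le a ({b} : Finset α)
    simp at this; omega



/-- In an `F_5^t`-free 3-graph, if `d(x,x') ≥ t+1` and `S, T` are disjoint,
then `d_{S,T}(x) + d_{S,T}(x') ≤ |S|·|T| + (t+3)·n`. -/
theorem stmt4 (n t : ℕ) (H : Finset (Finset (Fin n)))
    (h3 : ∀ e ∈ H, e.card = 3)
    -- `H` is `F_5^t`-free: no copy of the 3-graph on `{1,…,5+t}` with hyperedges
    -- `{123, 124} ∪ {34k : 5 ≤ k ≤ 5+t}`.
    (hfree : ¬ ∃ (a b c d : Fin n) (v : Fin (t + 1) → Fin n),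
      ({a, b, c, d} : Finset (Fin n)).card = 4 ∧
      Function.Injective v ∧
      (∀ i, v i ∉ ({a, b, c, d} : Finset (Fin n))) ∧
      ({a, b, c} : Finset (Fin n)) ∈ H ∧ ({a, b, d} : Finset (Fin n)) ∈ H ∧
      (∀ i, ({c, d, v i} : Finset (Fin n)) ∈ H))
    (x x' : Fin n)
    (hcod : t + 1 ≤ (Finset.univ.filter
      (fun v => ({x, x', v} : Finset (Fin n)) ∈ H)).card)
    (S T : Finset (Fin n)) (hST : Disjoint S T) :
    ((S ×ˢ T).filter (fun p => ({x, p.1, p.2} : Finset (Fin n)) ∈ H)).card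
      + ((S ×ˢ T).filter (fun p => ({x', p.1, p.2} : Finset (Fin n)) ∈ H)).card
      ≤ S.card * T.card + (t + 3) * n := by
  
  classical
  obtain ⟨V, hVsub, hVcard⟩ := Finset.exists_subset_card_eq hcod
  have hVmem : ∀ w ∈ V, ({x, x', w} : Finset (Fin n)) ∈ H := fun w hw =>
    (Finset.mem_filter.mp (hVsub hw)).2
  have hkey : ∀ w, ({x, x', w} : Finset (Fin n)) ∈ H → x ≠ x' ∧ x ≠ w ∧ x' ≠ w :=
    fun w hw => card3_ne (h3 _ hw)
  have hVne : V.Nonempty := Finset.card_pos.mp (by omega)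
  obtain ⟨w0, hw0⟩ := hVne
  have hxx' : x ≠ x' := (hkey w0 (hVmem w0 hw0)).1
  let e := V.equivFinOfCardEq hVcard
  set v : Fin (t + 1) → Fin n := fun i => (e.symm i : Fin n) with hv
  have hvinj : Function.Injective v := by
    intro i j hij
    exact e.symm.injective (Subtype.ext hij)
  have hvV : ∀ i, v i ∈ V := fun i => (e.symm i).2
  set B : Finset (Fin n) := insert x (insert x' V) with hB
  have hxB : x ∈ B := Finset.mem_insert_self _ _
  have hx'B : x' ∈ B := Finset.mem_insert_of_mem (Finset.mem_insert_self _ _)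
  have hVB : ∀ w ∈ V, w ∈ B := fun w hw =>
    Finset.mem_insert_of_mem (Finset.mem_insert_of_mem hw)
  have hBcard : B.card ≤ t + 3 := by
    rw [hB]
    have h1 := Finset.card_insert_le x (insert x' V)
    have h2 := Finset.card_insert_le x' V
    omega
  set A1 := (S ×ˢ T).filter (fun p => ({x, p.1, p.2} : Finset (Fin n)) ∈ H) with hA1
  set A2 := (S ×ˢ T).filter (fun p => ({x', p.1, p.2} : Finset (Fin n)) ∈ H) with hA2
  have hcards : A1.card + A2.card = (A1 ∪ A2).card + (A1 ∩ A2).card :=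
    (Finset.card_union_add_card_inter _ _).symm
  have h1 : (A1 ∪ A2).card ≤ S.card * T.card := by
    have hsub : A1 ∪ A2 ⊆ S ×ˢ T :=
      Finset.union_subset (Finset.filter_subset _ _) (Finset.filter_subset _ _)
    calc (A1 ∪ A2).card ≤ (S ×ˢ T).card := Finset.card_le_card hsub
      _ = S.card * T.card := Finset.card_product _ _
  have h2 : (A1 ∩ A2).card ≤ (t + 3) * n := by
    have hsub : A1 ∩ A2 ⊆ ((S ∩ B) ×ˢ T) ∪ (S ×ˢ (T ∩ B)) := by
      intro p hp
      simp only [hA1, hA2, Finset.mem_inter, Finset.mem_filter, Finset.mem_product] at hp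
      obtain ⟨⟨⟨hpS, hpT⟩, he1⟩, _, he2⟩ := hp
      by_cases h1B : p.1 ∈ B
      · exact Finset.mem_union_left _ (by simp [Finset.mem_product, hpS, hpT, h1B])
      by_cases h2B : p.2 ∈ B
      · exact Finset.mem_union_right _ (by simp [Finset.mem_product, hpS, hpT, h2B])
      exfalso
      have hyx : p.1 ≠ x := fun h => h1B (h ▸ hxB)
      have hyx' : p.1 ≠ x' := fun h => h1B (h ▸ hx'B)
      have hzx : p.2 ≠ x := fun h => h2B (h ▸ hxB)
      have hzx' : p.2 ≠ x' := fun h => h2B (h ▸ hx'B)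
      have hyz : p.1 ≠ p.2 := by
        intro h
        exact (Finset.disjoint_left.mp hST hpS) (h ▸ hpT)
      apply hfree
      refine ⟨p.1, p.2, x, x', v, ?_, hvinj, ?_, ?_, ?_, ?_⟩
      · rw [Finset.card_insert_of_notMem (by simp [hyz, hyx, hyx']),
          Finset.card_insert_of_notMem (by simp [hzx, hzx']),
          Finset.card_insert_of_notMem (by simp [hxx']),
          Finset.card_singleton]
      · intro i
        have hiV := hvV i
        have hk := hkey (v i) (hVmem _ hiV)
        simp only [Finset.mem_insert, Finset.mem_singleton]
        push_neg
        refine ⟨fun h => h1B (h ▸ hVB _ hiV), fun h => h2B (h ▸ hVB _ hiV),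
          fun h => hk.2.1 h.symm, fun h => hk.2.2 h.symm⟩
      · have : ({p.1, p.2, x} : Finset (Fin n)) = {x, p.1, p.2} := by
          ext u; simp; tauto
        rw [this]; exact he1
      · have : ({p.1, p.2, x'} : Finset (Fin n)) = {x', p.1, p.2} := by
          ext u; simp; tauto
        rw [this]; exact he2
      · exact fun i => hVmem _ (hvV i)
    have hSn : S.card ≤ n := by simpa using Finset.card_le_univ S
    have hTn : T.card ≤ n := by simpa using Finset.card_le_univ T
    have hd : Disjoint (S ∩ B) (T ∩ B) := hST.mono inf_le_left inf_le_left
    have hBsum : (S ∩ B).card + (T ∩ B).card ≤ B.card := by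
      rw [← Finset.card_union_of_disjoint hd]
      exact Finset.card_le_card (Finset.union_subset
        (Finset.inter_subset_right) (Finset.inter_subset_right))
    calc (A1 ∩ A2).card ≤ (((S ∩ B) ×ˢ T) ∪ (S ×ˢ (T ∩ B))).card :=
          Finset.card_le_card hsub
      _ ≤ ((S ∩ B) ×ˢ T).card + (S ×ˢ (T ∩ B)).card := Finset.card_union_le _ _
      _ = (S ∩ B).card * T.card + S.card * (T ∩ B).card := by
          rw [Finset.card_product, Finset.card_product]
      _ ≤ (S ∩ B).card * n + n * (T ∩ B).card := by
          gcongr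
      _ = ((S ∩ B).card + (T ∩ B).card) * n := by ring
      _ ≤ (t + 3) * n := Nat.mul_le_mul_right n (le_trans hBsum hBcard)
  omega
end

section
/- Let H be an F_5^t-free 3-uniform hypergraph on vertex set [n]. Suppose x, x' are vertices with codegree d(x,x') ≥ t+1, and S ⊆ [n]. Then d_{S,S}(x) + d_{S,S}(x') ≤ |S|^2/2 + (t+4)·n, where d_{S,S}(v) is the number of pairs {y,z} ⊆ S with {v,y,z} a hyperedge. -/
/-- In an `F_5^t`-free 3-graph, if `d(x,x') ≥ t+1` and `S ⊆ [n]`,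
then `d_{S,S}(x) + d_{S,S}(x') ≤ |S|^2/2 + (t+4)·n`, where `d_{S,S}(v)` counts
pairs `{y,z} ⊆ S` with `{v,y,z}` a hyperedge. -/
theorem stmt5 (n t : ℕ) (H : Finset (Finset (Fin n)))
    (h3 : ∀ e ∈ H, e.card = 3)
    (hfree : ¬ ∃ (a b c d : Fin n) (v : Fin (t + 1) → Fin n),
      ({a, b, c, d} : Finset (Fin n)).card = 4 ∧
      Function.Injective v ∧
      (∀ i, v i ∉ ({a, b, c, d} : Finset (Fin n))) ∧
      ({a, b, c} : Finset (Fin n)) ∈ H ∧ ({a, b, d} : Finset (Fin n)) ∈ H ∧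
      (∀ i, ({c, d, v i} : Finset (Fin n)) ∈ H))
    (x x' : Fin n)
    (hcod : t + 1 ≤ (Finset.univ.filter
      (fun v => ({x, x', v} : Finset (Fin n)) ∈ H)).card)
    (S : Finset (Fin n)) :
    (((S.powersetCard 2).filter (fun p => insert x p ∈ H)).card : ℝ)
      + (((S.powersetCard 2).filter (fun p => insert x' p ∈ H)).card : ℝ)
      ≤ (S.card : ℝ) ^ 2 / 2 + ((t : ℝ) + 4) * n := by
  classical
  obtain ⟨V, hVsub, hVcard⟩ := Finset.exists_subset_card_eq hcod
  have hVmem : ∀ v ∈ V, ({x, x', v} : Finset (Fin n)) ∈ H := by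
    intro v hv
    have := hVsub hv
    simpa using (Finset.mem_filter.mp this).2
  have hdist : ∀ v ∈ V, x ≠ x' ∧ v ≠ x ∧ v ≠ x' := by
    intro v hv
    have hc := h3 _ (hVmem v hv)
    refine ⟨fun he => ?_, fun he => ?_, fun he => ?_⟩ <;> rw [he] at hc
    · have he2 : ({x', x', v} : Finset (Fin n)) = {x', v} := by ext a; simp
      rw [he2] at hc
      have := Finset.card_insert_le x' ({v} : Finset (Fin n))
      simp at this; omega
    · have he2 : ({x, x', x} : Finset (Fin n)) = {x, x'} := by ext a; simp; tauto
      rw [he2] at hc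
      have := Finset.card_insert_le x ({x'} : Finset (Fin n))
      simp at this; omega
    · have he2 : ({x, x', x'} : Finset (Fin n)) = {x, x'} := by ext a; simp
      rw [he2] at hc
      have := Finset.card_insert_le x ({x'} : Finset (Fin n))
      simp at this; omega
  have hxx' : x ≠ x' := by
    have hV0 : V.Nonempty := by rw [← Finset.card_pos, hVcard]; omega
    obtain ⟨v, hv⟩ := hV0
    exact (hdist v hv).1
  set T : Finset (Fin n) := insert x (insert x' V) with hT
  -- key claim
  have key : ∀ p ∈ S.powersetCard 2, Disjoint p T →
      insert x p ∈ H → insert x' p ∈ H → False := by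
    intro p hp hdisj hpx hpx'
    rw [Finset.mem_powersetCard] at hp
    obtain ⟨y, z, hyz, rfl⟩ := Finset.card_eq_two.mp hp.2
    have hy : y ∉ T := Finset.disjoint_left.mp hdisj (by simp)
    have hz : z ∉ T := Finset.disjoint_left.mp hdisj (by simp)
    have hyx : y ≠ x := fun h => hy (by simp [hT, h])
    have hyx' : y ≠ x' := fun h => hy (by simp [hT, h])
    have hzx : z ≠ x := fun h => hz (by simp [hT, h])
    have hzx' : z ≠ x' := fun h => hz (by simp [hT, h])
    have hyV : y ∉ V := fun h => hy (by simp [hT, h])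
    have hzV : z ∉ V := fun h => hz (by simp [hT, h])
    apply hfree
    refine ⟨y, z, x, x', fun i => ((V.orderIsoOfFin hVcard) i : Fin n), ?_, ?_, ?_, ?_, ?_, ?_⟩
    · rw [Finset.card_insert_of_notMem (by simp [hyz, hyx, hyx']),
        Finset.card_insert_of_notMem (by simp [hzx, hzx']),
        Finset.card_insert_of_notMem (by simp [hxx']), Finset.card_singleton]
    · intro i j h
      exact (V.orderIsoOfFin hVcard).injective (Subtype.ext h)
    · intro i
      have hiV : ((V.orderIsoOfFin hVcard) i : Fin n) ∈ V := Finset.coe_mem _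
      obtain ⟨_, h1, h2⟩ := hdist _ hiV
      simp only [Finset.mem_insert, Finset.mem_singleton]
      push_neg
      exact ⟨fun h => hyV (h ▸ hiV), fun h => hzV (h ▸ hiV), h1, h2⟩
    · have : ({y, z, x} : Finset (Fin n)) = insert x {y, z} := by
        ext a; simp; tauto
      rw [this]; exact hpx
    · have : ({y, z, x'} : Finset (Fin n)) = insert x' {y, z} := by
        ext a; simp; tauto
      rw [this]; exact hpx'
    · intro i
      exact hVmem _ (Finset.coe_mem _)
  set P := S.powersetCard 2 with hP
  set A := P.filter (fun p => insert x p ∈ H) with hA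
  set B := P.filter (fun p => insert x' p ∈ H) with hB
  set Q := P.filter (fun p => ¬ Disjoint p T) with hQ
  have hAB : A ∩ B ⊆ Q := by
    intro p hp
    rw [Finset.mem_inter, hA, hB, Finset.mem_filter, Finset.mem_filter] at hp
    rw [hQ, Finset.mem_filter]
    refine ⟨hp.1.1, fun hdisj => key p hp.1.1 hdisj hp.1.2 hp.2.2⟩
  -- count Q
  have hQsub : Q ⊆ T.biUnion (fun u => P.filter (fun p => u ∈ p)) := by
    intro p hp
    rw [hQ, Finset.mem_filter] at hp
    rw [Finset.not_disjoint_iff] at hp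
    obtain ⟨hpP, u, hup, huT⟩ := hp
    exact Finset.mem_biUnion.mpr ⟨u, huT, Finset.mem_filter.mpr ⟨hpP, hup⟩⟩
  have hfib : ∀ u : Fin n, (P.filter (fun p => u ∈ p)).card ≤ S.card := by
    intro u
    have hsub : P.filter (fun p => u ∈ p) ⊆ S.image (fun w => insert u {w}) := by
      intro p hp
      rw [Finset.mem_filter, hP, Finset.mem_powersetCard] at hp
      obtain ⟨⟨hpS, hp2⟩, hup⟩ := hp
      obtain ⟨a, b, hab, rfl⟩ := Finset.card_eq_two.mp hp2
      rcases Finset.mem_insert.mp hup with h | h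
      · subst h
        exact Finset.mem_image.mpr ⟨b, hpS (by simp), rfl⟩
      · rw [Finset.mem_singleton] at h; subst h
        refine Finset.mem_image.mpr ⟨a, hpS (by simp), ?_⟩
        rw [Finset.pair_comm]
    calc (P.filter (fun p => u ∈ p)).card ≤ (S.image (fun w => insert u {w})).card :=
          Finset.card_le_card hsub
      _ ≤ S.card := Finset.card_image_le
  have hQcard : Q.card ≤ (t + 3) * n := by
    have h1 : Q.card ≤ T.card * S.card := by
      calc Q.card ≤ (T.biUnion (fun u => P.filter (fun p => u ∈ p))).card :=
            Finset.card_le_card hQsub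
        _ ≤ ∑ u ∈ T, (P.filter (fun p => u ∈ p)).card := Finset.card_biUnion_le
        _ ≤ ∑ _u ∈ T, S.card := Finset.sum_le_sum (fun u _ => hfib u)
        _ = T.card * S.card := by rw [Finset.sum_const, smul_eq_mul]
    have hTcard : T.card ≤ t + 3 := by
      calc T.card ≤ (insert x' V).card + 1 := Finset.card_insert_le _ _
        _ ≤ V.card + 1 + 1 := by
            have := Finset.card_insert_le x' V; omega
        _ = t + 3 := by omega
    have hScard : S.card ≤ n := by
      have := Finset.card_le_univ S
      simpa using this
    calc Q.card ≤ T.card * S.card := h1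
      _ ≤ (t + 3) * n := Nat.mul_le_mul hTcard hScard
  -- total
  have hnat : A.card + B.card ≤ S.card.choose 2 + (t + 3) * n := by
    have h1 : (A ∪ B).card + (A ∩ B).card = A.card + B.card :=
      Finset.card_union_add_card_inter A B
    have h2 : (A ∪ B).card ≤ P.card := by
      apply Finset.card_le_card
      intro p hp
      rcases Finset.mem_union.mp hp with h | h
      · exact Finset.mem_of_mem_filter _ h
      · exact Finset.mem_of_mem_filter _ h
    have h3 : (A ∩ B).card ≤ Q.card := Finset.card_le_card hAB
    have h4 : P.card = S.card.choose 2 := by rw [hP, Finset.card_powersetCard]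
    omega
  have hchoose : 2 * S.card.choose 2 ≤ S.card ^ 2 := by
    rw [Nat.choose_two_right]
    calc 2 * (S.card * (S.card - 1) / 2) ≤ S.card * (S.card - 1) := by
          rw [mul_comm]; exact Nat.div_mul_le_self _ _
      _ ≤ S.card ^ 2 := by nlinarith [Nat.sub_le S.card 1]
  have hScard : S.card ≤ n := by simpa using Finset.card_le_univ S
  have c1 : (A.card : ℝ) + B.card ≤ (S.card.choose 2 : ℝ) + (t + 3) * n := by
    exact_mod_cast hnat
  have c2 : (S.card.choose 2 : ℝ) ≤ (S.card : ℝ) ^ 2 / 2 := by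
    have : (2 : ℝ) * S.card.choose 2 ≤ (S.card : ℝ) ^ 2 := by exact_mod_cast hchoose
    linarith
  have hn0 : (0 : ℝ) ≤ n := by positivity
  linarith
end

section
/- For every odd integer t ≥ 1, there exists a 3-uniform hypergraph H on t+3 vertices with at least (t/3)·C(t+3,2) − (t+3)/3 hyperedges in which every pair of vertices has codegree at most t. -/
open Finset

namespace Stmt9

variable (m : ℕ)

abbrev V := Option (ZMod m)

/-- ordered pairs (x,y) with x, y, -x-y pairwise distinct -/
def Dset [NeZero m] : Finset (ZMod m × ZMod m) :=
  Finset.univ.filter fun p => p.1 ≠ p.2 ∧ p.1 ≠ -p.1 - p.2 ∧ p.2 ≠ -p.1 - p.2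

def Fmap : ZMod m × ZMod m → Finset (V m) :=
  fun p => ({p.1, p.2, -p.1 - p.2} : Finset (ZMod m)).image some

def gfun : ZMod m → ZMod m :=
  fun x => if x = 0 then 1 else if 3 * x = 0 then -x else -2 * x

def ffun : ZMod m → Finset (V m) := fun x => {none, some x, some (gfun m x)}

def S0 [NeZero m] : Finset (Finset (V m)) := (Dset m).image (Fmap m)

def Sinf [NeZero m] : Finset (Finset (V m)) := Finset.univ.image (ffun m)

def Hp [NeZero m] : Finset (Finset (V m)) := S0 m ∪ Sinf m

def Hw [NeZero m] : Finset (Finset (V m)) := (Finset.univ.powersetCard 3) \ Hp m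

variable {m}

section Lemmas

variable [NeZero m] (hm : Odd m) (hm3 : 3 ≤ m)
include hm

lemma two_unit : IsUnit (2 : ZMod m) := by
  have := (ZMod.isUnit_iff_coprime 2 m).2 (Nat.coprime_two_left.2 hm)
  simpa using this

lemma two_mul_eq_zero {x : ZMod m} (h : 2 * x = 0) : x = 0 :=
  ((two_unit hm).mul_right_eq_zero).1 h

include hm3

lemma gfun_ne (x : ZMod m) : gfun m x ≠ x := by
  haveI : Fact (1 < m) := ⟨by omega⟩
  unfold gfun
  split_ifs with h0 h3
  · subst h0; exact one_ne_zero
  · intro h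
    exact h0 (two_mul_eq_zero hm (by linear_combination -h))
  · intro h
    exact h3 (by linear_combination -h)

lemma ffun_card (x : ZMod m) : (ffun m x).card = 3 := by
  refine Finset.card_eq_three.2 ⟨none, some x, some (gfun m x), by simp, by simp, ?_, rfl⟩
  simpa using (gfun_ne hm hm3 x).symm

lemma Fmap_card {p : ZMod m × ZMod m} (hp : p ∈ Dset m) : (Fmap m p).card = 3 := by
  rw [Dset, Finset.mem_filter] at hp
  obtain ⟨-, h1, h2, h3⟩ := hp
  rw [Fmap, Finset.card_image_of_injective _ (Option.some_injective _)]
  rw [Finset.card_insert_of_notMem (by simp [h1, h2]),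
    Finset.card_insert_of_notMem (by simp [h3]), Finset.card_singleton]

lemma Hp_subset : Hp m ⊆ Finset.univ.powersetCard 3 := by
  intro T hT
  rw [Hp, Finset.mem_union] at hT
  rw [Finset.mem_powersetCard]
  refine ⟨Finset.subset_univ _, ?_⟩
  rcases hT with hT | hT
  · obtain ⟨p, hp, rfl⟩ := Finset.mem_image.1 hT
    exact Fmap_card hm hm3 hp
  · obtain ⟨x, _, rfl⟩ := Finset.mem_image.1 hT
    exact ffun_card hm hm3 x

/-- every pair of distinct vertices is covered by some removed triple -/
lemma cover (u v : V m) (huv : u ≠ v) : ∃ T ∈ Hp m, u ∈ T ∧ v ∈ T := by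
  have hmemSinf : ∀ x : ZMod m, ffun m x ∈ Hp m := fun x =>
    Finset.mem_union_right _ (Finset.mem_image_of_mem _ (Finset.mem_univ x))
  match u, v with
  | none, none => exact absurd rfl huv
  | none, some x => exact ⟨ffun m x, hmemSinf x, by simp [ffun], by simp [ffun]⟩
  | some x, none => exact ⟨ffun m x, hmemSinf x, by simp [ffun], by simp [ffun]⟩
  | some x, some y =>
    have hxy : x ≠ y := by simpa using huv
    by_cases h1 : y = -2 * x
    · have hx0 : x ≠ 0 := by
        rintro rfl; apply hxy; rw [h1]; ring
      have h3 : 3 * x ≠ 0 := by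
        intro h3; exact hxy (by linear_combination -h1 + h3)
      refine ⟨ffun m x, hmemSinf x, by simp [ffun], ?_⟩
      have : gfun m x = -2 * x := by rw [gfun]; rw [if_neg hx0, if_neg h3]
      simp [ffun, this, h1]
    · by_cases h2 : x = -2 * y
      · have hy0 : y ≠ 0 := by
          rintro rfl; apply hxy; rw [h2]; ring
        have h3 : 3 * y ≠ 0 := by
          intro h3; exact hxy (by linear_combination h2 - h3)
        refine ⟨ffun m y, hmemSinf y, ?_, by simp [ffun]⟩
        have : gfun m y = -2 * y := by rw [gfun]; rw [if_neg hy0, if_neg h3]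
        simp [ffun, this, h2]
      · refine ⟨Fmap m (x, y), Finset.mem_union_left _ (Finset.mem_image_of_mem _ ?_),
          by simp [Fmap], by simp [Fmap]⟩
        rw [Dset, Finset.mem_filter]
        refine ⟨Finset.mem_univ _, hxy, ?_, ?_⟩
        · intro h; exact h1 (by linear_combination h)
        · intro h; exact h2 (by linear_combination h)

omit hm hm3 in
lemma card_univ_V : Fintype.card (V m) = m + 1 := by
  rw [Fintype.card_option, ZMod.card]

lemma codeg (u v : V m) (huv : u ≠ v) :
    ((Hw m).filter fun e => u ∈ e ∧ v ∈ e).card + 2 ≤ m := by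
  obtain ⟨T, hT, huT, hvT⟩ := cover hm hm3 u v huv
  set A := ((Finset.univ.powersetCard 3 : Finset (Finset (V m))).filter
    fun e => u ∈ e ∧ v ∈ e) with hA
  have hTA : T ∈ A := Finset.mem_filter.2 ⟨Hp_subset hm hm3 hT, huT, hvT⟩
  have hsub : (Hw m).filter (fun e => u ∈ e ∧ v ∈ e) ⊆ A.erase T := by
    intro S hS
    rw [Finset.mem_filter, Hw, Finset.mem_sdiff] at hS
    refine Finset.mem_erase.2 ⟨?_, Finset.mem_filter.2 ⟨hS.1.1, hS.2⟩⟩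
    rintro rfl; exact hS.1.2 hT
  have hAcard : A.card ≤ m - 1 := by
    have himg : A ⊆ (Finset.univ \ {u, v}).image (fun w => insert u (insert v {w})) := by
      intro S hS
      rw [hA, Finset.mem_filter, Finset.mem_powersetCard] at hS
      obtain ⟨⟨-, hcard⟩, huS, hvS⟩ := hS
      have hnsub : ¬ S ⊆ {u, v} := by
        intro hsub'
        have h1 := Finset.card_le_card hsub'
        have h2 : ({u, v} : Finset (V m)).card ≤ 2 :=
          (Finset.card_insert_le _ _).trans (by simp)
        omega
      obtain ⟨w, hwS, hw⟩ := Finset.not_subset.1 hnsub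
      simp only [Finset.mem_insert, Finset.mem_singleton, not_or] at hw
      refine Finset.mem_image.2 ⟨w, by simp [hw.1, hw.2], ?_⟩
      have hsub2 : insert u (insert v ({w} : Finset (V m))) ⊆ S :=
        Finset.insert_subset huS (Finset.insert_subset hvS (by simpa using hwS))
      have hc3 : (insert u (insert v ({w} : Finset (V m)))).card = 3 := by
        rw [Finset.card_insert_of_notMem (by simp [huv, Ne.symm hw.1]),
          Finset.card_insert_of_notMem (by simp [Ne.symm hw.2]), Finset.card_singleton]
      exact Finset.eq_of_subset_of_card_le hsub2 (by omega)
    have h1 := Finset.card_le_card himg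
    have h2 := Finset.card_image_le (s := (Finset.univ \ {u, v} : Finset (V m)))
      (f := fun w => insert u (insert v ({w} : Finset (V m))))
    have h3 : (Finset.univ \ ({u, v} : Finset (V m))).card = m + 1 - 2 := by
      rw [Finset.card_sdiff_of_subset (Finset.subset_univ _), Finset.card_univ, card_univ_V]
      congr 1
      rw [Finset.card_insert_of_notMem (by simpa using huv), Finset.card_singleton]
    omega
  have h4 := Finset.card_le_card hsub
  have h5 : (A.erase T).card = A.card - 1 := Finset.card_erase_of_mem hTA
  have h6 : 1 ≤ A.card := Finset.card_pos.2 ⟨T, hTA⟩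
  omega

end Lemmas

section Counting

variable [NeZero m]

def Ex (x : ZMod m) : Finset (ZMod m) :=
  Finset.univ.filter fun y => x ≠ y ∧ x ≠ -x - y ∧ y ≠ -x - y

lemma card_filter_neg_Ex (x : ZMod m) :
    (Ex x).card + (Finset.univ.filter fun y : ZMod m =>
      ¬(x ≠ y ∧ x ≠ -x - y ∧ y ≠ -x - y)).card = m := by
  rw [Ex, Finset.card_filter_add_card_filter_not, Finset.card_univ, ZMod.card]

lemma Ex_card3 (hm : Odd m) {x : ZMod m} (h3 : 3 * x ≠ 0) : (Ex x).card + 3 ≤ m := by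
  obtain ⟨u, hu⟩ := two_unit (m := m) hm
  set c := (↑u⁻¹ : ZMod m) * (-x) with hc
  have h2c : 2 * c = -x := by rw [hc, ← hu, ← mul_assoc]; simp
  have hx2 : x ≠ -2 * x := fun h => h3 (by linear_combination h)
  have hxc : x ≠ c := by
    intro h
    rw [← h] at h2c
    exact h3 (by linear_combination h2c)
  have hmx : -2 * x ≠ c := by
    intro h
    rw [← h] at h2c
    exact h3 (by linear_combination -h2c)
  have hsub : ({x, -2 * x, c} : Finset (ZMod m)) ⊆
      Finset.univ.filter fun y : ZMod m => ¬(x ≠ y ∧ x ≠ -x - y ∧ y ≠ -x - y) := by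
    intro y hy
    simp only [Finset.mem_insert, Finset.mem_singleton] at hy
    rw [Finset.mem_filter]
    refine ⟨Finset.mem_univ _, ?_⟩
    push_neg
    rcases hy with rfl | rfl | rfl
    · intro h; exact absurd rfl h
    · intro _ h; exact absurd (by ring) h
    · intro _ _; linear_combination h2c
  have hcard3 : ({x, -2 * x, c} : Finset (ZMod m)).card = 3 := by
    rw [Finset.card_insert_of_notMem (by
        rw [Finset.mem_insert, Finset.mem_singleton]; push_neg; exact ⟨hx2, hxc⟩),
      Finset.card_insert_of_notMem (by rw [Finset.mem_singleton]; exact hmx),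
      Finset.card_singleton]
  have hge := Finset.card_le_card hsub
  rw [hcard3] at hge
  have hkey := card_filter_neg_Ex (m := m) x
  omega

lemma Ex_card1 (x : ZMod m) : (Ex x).card + 1 ≤ m := by
  have hmem : x ∈ Finset.univ.filter fun y : ZMod m =>
      ¬(x ≠ y ∧ x ≠ -x - y ∧ y ≠ -x - y) := by
    rw [Finset.mem_filter]
    exact ⟨Finset.mem_univ _, by push_neg; intro h; exact absurd rfl h⟩
  have hge : 1 ≤ (Finset.univ.filter fun y : ZMod m =>
      ¬(x ≠ y ∧ x ≠ -x - y ∧ y ≠ -x - y)).card := Finset.card_pos.2 ⟨x, hmem⟩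
  have hkey := card_filter_neg_Ex (m := m) x
  omega

lemma fiber_le (x : ZMod m) : ((Dset m).filter fun p => p.1 = x).card ≤ (Ex x).card := by
  apply Finset.card_le_card_of_injOn Prod.snd
  · intro p hp
    rw [Finset.mem_coe, Finset.mem_filter] at hp
    obtain ⟨hpD, hpx⟩ := hp
    rw [Dset, Finset.mem_filter] at hpD
    obtain ⟨-, h1, h2, h3⟩ := hpD
    rw [Finset.mem_coe, Ex, Finset.mem_filter]
    rw [hpx] at h1 h2 h3
    exact ⟨Finset.mem_univ _, h1, h2, h3⟩
  · intro p hp q hq h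
    rw [Finset.mem_coe, Finset.mem_filter] at hp hq
    exact Prod.ext (hp.2.trans hq.2.symm) h

lemma DK (hm : Odd m) :
    (Dset m).card + ∑ x : ZMod m, (if 3 * x = 0 then 1 else 3) ≤ m * m := by
  have hD : (Dset m).card = ∑ x : ZMod m, ((Dset m).filter fun p => p.1 = x).card :=
    Finset.card_eq_sum_card_fiberwise (fun p _ => Finset.mem_univ p.1)
  have hstep : ∀ x : ZMod m,
      ((Dset m).filter fun p => p.1 = x).card + (if 3 * x = 0 then 1 else 3) ≤ m := by
    intro x
    have hf := fiber_le (m := m) x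
    split_ifs with h
    · have := Ex_card1 (m := m) x; omega
    · have := Ex_card3 (m := m) hm h; omega
  calc (Dset m).card + ∑ x : ZMod m, (if 3 * x = 0 then 1 else 3)
      = ∑ x : ZMod m, (((Dset m).filter fun p => p.1 = x).card + (if 3 * x = 0 then 1 else 3)) := by
        rw [Finset.sum_add_distrib, ← hD]
    _ ≤ ∑ _x : ZMod m, m := Finset.sum_le_sum (fun x _ => hstep x)
    _ = m * m := by
        rw [Finset.sum_const, Finset.card_univ, ZMod.card, smul_eq_mul]

lemma mem_Dset_iff {a c : ZMod m} :
    (a, c) ∈ Dset m ↔ a ≠ c ∧ a ≠ -a - c ∧ c ≠ -a - c := by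
  rw [Dset, Finset.mem_filter]
  simp

lemma S0_six : 6 * (S0 m).card ≤ (Dset m).card := by
  have hfib : (Dset m).card = ∑ b ∈ S0 m, ((Dset m).filter fun p => Fmap m p = b).card :=
    Finset.card_eq_sum_card_fiberwise (fun p hp => Finset.mem_image_of_mem _ hp)
  have hbound : ∀ b ∈ S0 m, 6 ≤ ((Dset m).filter fun p => Fmap m p = b).card := by
    intro b hb
    obtain ⟨p, hp, rfl⟩ := Finset.mem_image.1 hb
    obtain ⟨x, y⟩ := p
    have hmem := (mem_Dset_iff (m := m)).1 hp
    obtain ⟨hxy, hxz, hyz⟩ := hmem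
    have hFI : ∀ a c : ZMod m, Fmap m (a, c) = ({a, c, -a - c} : Finset (ZMod m)).image some :=
      fun a c => rfl
    have hcard : ({x, y, -x - y} : Finset (ZMod m)).card = 3 := by
      rw [Finset.card_insert_of_notMem (by
          rw [Finset.mem_insert, Finset.mem_singleton]; push_neg; exact ⟨hxy, hxz⟩),
        Finset.card_insert_of_notMem (by rw [Finset.mem_singleton]; exact hyz),
        Finset.card_singleton]
    have hyx : y ≠ x := hxy.symm
    have hzx : -x - y ≠ x := hxz.symm
    have hzy : -x - y ≠ y := hyz.symm
    have hsub : ({x, y, -x - y} : Finset (ZMod m)).offDiag ⊆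
        (Dset m).filter fun q => Fmap m q = Fmap m (x, y) := by
      intro q hq
      rw [Finset.mem_offDiag] at hq
      obtain ⟨hq1, hq2, hne⟩ := hq
      obtain ⟨a, c⟩ := q
      simp only [Finset.mem_insert, Finset.mem_singleton] at hq1 hq2
      rw [Finset.mem_filter, mem_Dset_iff, hFI, hFI]
      rcases hq1 with rfl | rfl | rfl <;> rcases hq2 with rfl | rfl | rfl
      · exact absurd rfl hne
      · exact ⟨⟨hxy, hxz, hyz⟩, rfl⟩
      · -- (x, -x-y)
        refine ⟨⟨?_, ?_, ?_⟩, ?_⟩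
        · (intro h; first
            | exact hxy (by linear_combination h) | exact hxy (by linear_combination -h)
            | exact hxz (by linear_combination h) | exact hxz (by linear_combination -h)
            | exact hyz (by linear_combination h) | exact hyz (by linear_combination -h))
        · (intro h; first
            | exact hxy (by linear_combination h) | exact hxy (by linear_combination -h)
            | exact hxz (by linear_combination h) | exact hxz (by linear_combination -h)
            | exact hyz (by linear_combination h) | exact hyz (by linear_combination -h))
        · (intro h; first
            | exact hxy (by linear_combination h) | exact hxy (by linear_combination -h)
            | exact hxz (by linear_combination h) | exact hxz (by linear_combination -h)
            | exact hyz (by linear_combination h) | exact hyz (by linear_combination -h))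
        · congr 1
          rw [show -a - (-a - y) = y from by ring]
          ext w
          simp only [Finset.mem_insert, Finset.mem_singleton]
          tauto
      · -- (y, x)
        refine ⟨⟨?_, ?_, ?_⟩, ?_⟩
        · (intro h; first
            | exact hxy (by linear_combination h) | exact hxy (by linear_combination -h)
            | exact hxz (by linear_combination h) | exact hxz (by linear_combination -h)
            | exact hyz (by linear_combination h) | exact hyz (by linear_combination -h))
        · (intro h; first
            | exact hxy (by linear_combination h) | exact hxy (by linear_combination -h)
            | exact hxz (by linear_combination h) | exact hxz (by linear_combination -h)
            | exact hyz (by linear_combination h) | exact hyz (by linear_combination -h))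
        · (intro h; first
            | exact hxy (by linear_combination h) | exact hxy (by linear_combination -h)
            | exact hxz (by linear_combination h) | exact hxz (by linear_combination -h)
            | exact hyz (by linear_combination h) | exact hyz (by linear_combination -h))
        · congr 1
          rw [show -a - c = -c - a from by ring]
          ext w
          simp only [Finset.mem_insert, Finset.mem_singleton]
          tauto
      · exact absurd rfl hne
      · -- (y, -x-y)
        refine ⟨⟨?_, ?_, ?_⟩, ?_⟩
        · (intro h; first
            | exact hxy (by linear_combination h) | exact hxy (by linear_combination -h)
            | exact hxz (by linear_combination h) | exact hxz (by linear_combination -h)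
            | exact hyz (by linear_combination h) | exact hyz (by linear_combination -h))
        · (intro h; first
            | exact hxy (by linear_combination h) | exact hxy (by linear_combination -h)
            | exact hxz (by linear_combination h) | exact hxz (by linear_combination -h)
            | exact hyz (by linear_combination h) | exact hyz (by linear_combination -h))
        · (intro h; first
            | exact hxy (by linear_combination h) | exact hxy (by linear_combination -h)
            | exact hxz (by linear_combination h) | exact hxz (by linear_combination -h)
            | exact hyz (by linear_combination h) | exact hyz (by linear_combination -h))
        · congr 1
          rw [show -a - (-x - a) = x from by ring]
          ext w
          simp only [Finset.mem_insert, Finset.mem_singleton]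
          tauto
      · -- (-x-y, x)
        refine ⟨⟨?_, ?_, ?_⟩, ?_⟩
        · (intro h; first
            | exact hxy (by linear_combination h) | exact hxy (by linear_combination -h)
            | exact hxz (by linear_combination h) | exact hxz (by linear_combination -h)
            | exact hyz (by linear_combination h) | exact hyz (by linear_combination -h))
        · (intro h; first
            | exact hxy (by linear_combination h) | exact hxy (by linear_combination -h)
            | exact hxz (by linear_combination h) | exact hxz (by linear_combination -h)
            | exact hyz (by linear_combination h) | exact hyz (by linear_combination -h))
        · (intro h; first
            | exact hxy (by linear_combination h) | exact hxy (by linear_combination -h)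
            | exact hxz (by linear_combination h) | exact hxz (by linear_combination -h)
            | exact hyz (by linear_combination h) | exact hyz (by linear_combination -h))
        · congr 1
          rw [show -(-c - y) - c = y from by ring]
          ext w
          simp only [Finset.mem_insert, Finset.mem_singleton]
          tauto
      · -- (-x-y, y)
        refine ⟨⟨?_, ?_, ?_⟩, ?_⟩
        · (intro h; first
            | exact hxy (by linear_combination h) | exact hxy (by linear_combination -h)
            | exact hxz (by linear_combination h) | exact hxz (by linear_combination -h)
            | exact hyz (by linear_combination h) | exact hyz (by linear_combination -h))
        · (intro h; first
            | exact hxy (by linear_combination h) | exact hxy (by linear_combination -h)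
            | exact hxz (by linear_combination h) | exact hxz (by linear_combination -h)
            | exact hyz (by linear_combination h) | exact hyz (by linear_combination -h))
        · (intro h; first
            | exact hxy (by linear_combination h) | exact hxy (by linear_combination -h)
            | exact hxz (by linear_combination h) | exact hxz (by linear_combination -h)
            | exact hyz (by linear_combination h) | exact hyz (by linear_combination -h))
        · congr 1
          rw [show -(-x - c) - c = x from by ring]
          ext w
          simp only [Finset.mem_insert, Finset.mem_singleton]
          tauto
      · exact absurd rfl hne
    have hoff : ({x, y, -x - y} : Finset (ZMod m)).offDiag.card = 6 := by
      rw [Finset.offDiag_card, hcard]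
    calc (6 : ℕ) = ({x, y, -x - y} : Finset (ZMod m)).offDiag.card := hoff.symm
      _ ≤ _ := Finset.card_le_card hsub
  calc 6 * (S0 m).card = ∑ _b ∈ S0 m, 6 := by rw [Finset.sum_const, smul_eq_mul, mul_comm]
    _ ≤ ∑ b ∈ S0 m, ((Dset m).filter fun p => Fmap m p = b).card :=
        Finset.sum_le_sum hbound
    _ = (Dset m).card := hfib.symm

lemma K_le3 (hm3 : 3 ≤ m) (hdvd : 3 ∣ m) :
    (Finset.univ.filter fun x : ZMod m => 3 * x = 0).card ≤ 3 := by
  obtain ⟨k, hk⟩ := hdvd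
  have hk0 : 0 < k := by omega
  have hsub : (Finset.univ.filter fun x : ZMod m => 3 * x = 0) ⊆
      ({0, ((k : ℕ) : ZMod m), ((k * 2 : ℕ) : ZMod m)} : Finset (ZMod m)) := by
    intro x hx
    rw [Finset.mem_filter] at hx
    have hv : ((x.val : ℕ) : ZMod m) = x := ZMod.natCast_rightInverse x
    have hcast : ((3 * x.val : ℕ) : ZMod m) = 0 := by push_cast [hv]; exact hx.2
    have hdvd2 : m ∣ 3 * x.val := (ZMod.natCast_eq_zero_iff _ _).1 hcast
    have hdvd3 : 3 * k ∣ 3 * x.val := by rw [← hk]; exact hdvd2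
    obtain ⟨j, hj⟩ := hdvd3
    have hxval : x.val = k * j := Nat.eq_of_mul_eq_mul_left (show 0 < 3 by norm_num) (by rw [hj]; ring)
    have hjlt : j < 3 := by
      have hlt := ZMod.val_lt x
      have hlt2 : k * j < 3 * k := by rw [← hxval, ← hk]; exact hlt
      by_contra hge
      push_neg at hge
      nlinarith
    have hxeq : x = ((k * j : ℕ) : ZMod m) := by rw [← hxval, hv]
    rw [Finset.mem_insert, Finset.mem_insert, Finset.mem_singleton]
    interval_cases j
    · left; rw [hxeq]; simp
    · right; left; rw [hxeq]; simp
    · right; right; rw [hxeq]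
  calc (Finset.univ.filter fun x : ZMod m => 3 * x = 0).card
      ≤ ({0, ((k : ℕ) : ZMod m), ((k * 2 : ℕ) : ZMod m)} : Finset (ZMod m)).card :=
        Finset.card_le_card hsub
    _ ≤ 3 := by
        refine (Finset.card_insert_le _ _).trans ?_
        have := Finset.card_insert_le (((k : ℕ) : ZMod m)) ({((k * 2 : ℕ) : ZMod m)} : Finset (ZMod m))
        simp only [Finset.card_singleton] at this
        omega

lemma K_le1 (hdvd : ¬ 3 ∣ m) :
    (Finset.univ.filter fun x : ZMod m => 3 * x = 0).card ≤ 1 := by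
  have hcop : Nat.Coprime 3 m := (Nat.Prime.coprime_iff_not_dvd Nat.prime_three).2 hdvd
  have hu : IsUnit (3 : ZMod m) := by
    have := (ZMod.isUnit_iff_coprime 3 m).2 hcop
    simpa using this
  have hsub : (Finset.univ.filter fun x : ZMod m => 3 * x = 0) ⊆ ({0} : Finset (ZMod m)) := by
    intro x hx
    rw [Finset.mem_filter] at hx
    rw [Finset.mem_singleton]
    exact (hu.mul_right_eq_zero).1 hx.2
  exact (Finset.card_le_card hsub).trans (by simp)

lemma Sinf_le : (Sinf m).card ≤ m := by
  refine (Finset.card_image_le).trans ?_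
  rw [Finset.card_univ, ZMod.card]

lemma Sinf_le' (hm : Odd m) (hm3 : 3 ≤ m) (hdvd : 3 ∣ m) : (Sinf m).card + 1 ≤ m := by
  obtain ⟨k, hk⟩ := hdvd
  have hk0 : 0 < k := by omega
  have hklt : k < m := by omega
  set κ : ZMod m := ((k : ℕ) : ZMod m) with hκ
  have hκval : κ.val = k := ZMod.val_cast_of_lt hklt
  have hκ0 : κ ≠ 0 := by
    intro h
    rw [h, ZMod.val_zero] at hκval
    omega
  have h3κ : 3 * κ = 0 := by
    rw [hκ]
    have : ((3 * k : ℕ) : ZMod m) = 0 := by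
      rw [← hk]; exact ZMod.natCast_self m
    push_cast at this
    linear_combination this
  have h2κ0 : 2 * κ ≠ 0 := fun h => hκ0 (two_mul_eq_zero hm h)
  have hκne : κ ≠ 2 * κ := by
    intro h
    exact hκ0 (by linear_combination -h)
  -- gfun values
  have hgκ : gfun m κ = -κ := by
    rw [gfun, if_neg hκ0, if_pos h3κ]
  have hg2κ : gfun m (2 * κ) = -(2 * κ) := by
    rw [gfun, if_neg h2κ0, if_pos (by linear_combination 2 * h3κ)]
  have hfeq : ffun m (2 * κ) = ffun m κ := by
    rw [ffun, ffun, hgκ, hg2κ]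
    have h1 : 2 * κ = -κ := by linear_combination h3κ
    have h2 : -(2 * κ) = κ := by linear_combination -h3κ
    rw [h2, h1, Finset.pair_comm (some (-κ)) (some κ)]
  have himg : Sinf m = (Finset.univ.erase (2 * κ)).image (ffun m) := by
    apply Finset.Subset.antisymm
    · intro T hT
      obtain ⟨x, -, rfl⟩ := Finset.mem_image.1 hT
      by_cases hx : x = 2 * κ
      · subst hx
        exact Finset.mem_image.2 ⟨κ, Finset.mem_erase.2 ⟨hκne, Finset.mem_univ _⟩, hfeq.symm⟩
      · exact Finset.mem_image.2 ⟨x, Finset.mem_erase.2 ⟨hx, Finset.mem_univ _⟩, rfl⟩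
    · exact Finset.image_subset_image (Finset.erase_subset _ _)
  rw [himg]
  have h1 := Finset.card_image_le (s := Finset.univ.erase (2 * κ)) (f := ffun m)
  have h2 : (Finset.univ.erase (2 * κ) : Finset (ZMod m)).card = m - 1 := by
    rw [Finset.card_erase_of_mem (Finset.mem_univ _), Finset.card_univ, ZMod.card]
  omega

lemma key6 (hm : Odd m) (hm3 : 3 ≤ m) : 6 * (Hp m).card ≤ (m + 1) * (m + 2) := by
  have hU : (Hp m).card ≤ (S0 m).card + (Sinf m).card := Finset.card_union_le _ _
  have hS0 := S0_six (m := m)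
  have hDK := DK (m := m) hm
  -- evaluate the sum
  set K := (Finset.univ.filter fun x : ZMod m => 3 * x = 0) with hK
  set N := (Finset.univ.filter fun x : ZMod m => ¬ 3 * x = 0) with hN
  have hKN : K.card + N.card = m := by
    rw [hK, hN, Finset.card_filter_add_card_filter_not, Finset.card_univ, ZMod.card]
  have hsum : ∑ x : ZMod m, (if 3 * x = 0 then 1 else 3) = K.card * 1 + N.card * 3 := by
    rw [Finset.sum_ite, Finset.sum_const, Finset.sum_const, smul_eq_mul, smul_eq_mul]
  rw [hsum] at hDK
  by_cases hdvd : 3 ∣ m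
  · have hKc := K_le3 (m := m) hm3 hdvd
    have hSinf := Sinf_le' (m := m) hm hm3 hdvd
    nlinarith [hS0, hDK, hU, hKN, hKc, hSinf]
  · have hKc := K_le1 (m := m) hdvd
    have hSinf := Sinf_le (m := m)
    nlinarith [hS0, hDK, hU, hKN, hKc, hSinf]

end Counting

end Stmt9

/-- For every odd `t ≥ 1`, there exists a 3-graph on `t+3` vertices with
at least `(t/3)·C(t+3,2) − (t+3)/3` hyperedges in which every pair of vertices has
codegree at most `t`. -/
theorem stmt9 (t : ℕ) (ht : Odd t) (ht1 : 1 ≤ t) :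
    ∃ H : Finset (Finset (Fin (t + 3))),
      (∀ e ∈ H, e.card = 3) ∧
      (∀ x y : Fin (t + 3), x ≠ y →
        (H.filter (fun e => x ∈ e ∧ y ∈ e)).card ≤ t) ∧
      (t : ℝ) / 3 * ((t + 3).choose 2) - ((t : ℝ) + 3) / 3 ≤ (H.card : ℝ) := by
  classical
  set m := t + 2 with hmdef
  haveI : NeZero m := ⟨by omega⟩
  have hmodd : Odd m := by
    obtain ⟨s, hs⟩ := ht
    exact ⟨s + 1, by omega⟩
  have hm3 : 3 ≤ m := by omega
  have hcardV : Fintype.card (Stmt9.V m) = t + 3 := by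
    rw [Stmt9.card_univ_V]
  let e : Stmt9.V m ≃ Fin (t + 3) := Fintype.equivFinOfCardEq hcardV
  refine ⟨(Stmt9.Hw m).image (Finset.image e), ?_, ?_, ?_⟩
  · intro E hE
    obtain ⟨T, hT, rfl⟩ := Finset.mem_image.1 hE
    rw [Finset.card_image_of_injective _ e.injective]
    rw [Stmt9.Hw, Finset.mem_sdiff, Finset.mem_powersetCard] at hT
    exact hT.1.2
  · intro x y hxy
    have hps : ∀ (T : Finset (Stmt9.V m)) (z : Fin (t + 3)), z ∈ T.image e ↔ e.symm z ∈ T := by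
      intro T z
      rw [Finset.mem_image]
      constructor
      · rintro ⟨a, ha, rfl⟩; simpa using ha
      · intro h; exact ⟨e.symm z, h, by simp⟩
    rw [Finset.filter_image]
    rw [Finset.card_image_of_injective _ (Finset.image_injective e.injective)]
    have hcod := Stmt9.codeg (m := m) hmodd hm3 (e.symm x) (e.symm y)
      (fun h => hxy (e.symm.injective h))
    have hfilt : ((Stmt9.Hw m).filter fun T => x ∈ T.image e ∧ y ∈ T.image e) =
        ((Stmt9.Hw m).filter fun T => e.symm x ∈ T ∧ e.symm y ∈ T) := by
      apply Finset.filter_congr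
      intro T _
      rw [hps, hps]
    rw [hfilt]
    omega
  · have hHsub : Stmt9.Hp m ⊆ Finset.univ.powersetCard 3 := Stmt9.Hp_subset hmodd hm3
    have hcard : (Stmt9.Hw m).card + (Stmt9.Hp m).card = (t + 3).choose 3 := by
      rw [Stmt9.Hw, Finset.card_sdiff_add_card_eq_card hHsub, Finset.card_powersetCard,
        Finset.card_univ, hcardV]
    have hkey := Stmt9.key6 (m := m) hmodd hm3
    have hk2 : 6 * (Stmt9.Hp m).card ≤ (t + 3) * (t + 4) :=
      hkey.trans (le_of_eq (by rw [hmdef]))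
    have hch2 : 2 * ((t + 3).choose 2) = (t + 3) * (t + 2) := by
      have h := Nat.add_one_mul_choose_eq (t + 2) 1
      rw [Nat.choose_one_right] at h
      rw [mul_comm]
      exact h.symm
    have hch3 : 6 * ((t + 3).choose 3) = (t + 3) * (t + 2) * (t + 1) := by
      have h1 := Nat.add_one_mul_choose_eq (t + 2) 2
      have h2 := Nat.add_one_mul_choose_eq (t + 1) 1
      rw [Nat.choose_one_right] at h2
      nlinarith [h1, h2]
    have hnat : t * ((t + 3) * (t + 2)) ≤ 6 * (Stmt9.Hw m).card + 2 * (t + 3) := by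
      have hident : t * ((t + 3) * (t + 2)) + (t + 3) * (t + 4) =
          6 * ((t + 3).choose 3) + 2 * (t + 3) := by rw [hch3]; ring
      have h6 : 6 * ((t + 3).choose 3) = 6 * (Stmt9.Hw m).card + 6 * (Stmt9.Hp m).card := by
        omega
      linarith [hk2]
    have hHcards : (((Stmt9.Hw m).image (Finset.image e)).card : ℝ) = ((Stmt9.Hw m).card : ℝ) := by
      rw [Finset.card_image_of_injective _ (Finset.image_injective e.injective)]
    rw [hHcards]
    have hR : (t : ℝ) * (((t : ℝ) + 3) * ((t : ℝ) + 2)) ≤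
        6 * ((Stmt9.Hw m).card : ℝ) + 2 * ((t : ℝ) + 3) := by
      exact_mod_cast hnat
    have hC : (((t + 3).choose 2 : ℕ) : ℝ) * 2 = ((t : ℝ) + 3) * ((t : ℝ) + 2) := by
      exact_mod_cast congrArg (Nat.cast (R := ℝ)) ((mul_comm 2 ((t + 3).choose 2)) ▸ hch2)
    have h2tC : (t : ℝ) * ((((t + 3).choose 2 : ℕ)) : ℝ) * 2 =
        (t : ℝ) * (((t : ℝ) + 3) * ((t : ℝ) + 2)) := by
      rw [mul_assoc, hC]
    linarith [hR, h2tC]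
end

section
/- Let t ≥ 0, ε > 0 be sufficiently small, and let H be a 3-uniform hypergraph on [n] (n large) with a partition π = (V_1, V_2, V_3) of [n] such that |H \ H_π| ≤ ε·n^3 and |H| ≥ (1/27 − ε)·n^3, where H_π is the set of hyperedges with one vertex in each part. If |V_i| ≤ (1/3 − 3√ε)·n for some i, then |H| ≤ (1/27 − (5/4)ε − (27/4)ε^{3/2})·n^3. Consequently, every part satisfies (1/3 − 3√ε)·n < |V_i| < (1/3 + 6√ε)·n. -/
open scoped Classical

set_option maxHeartbeats 1000000

lemma aux_real (n x y z s : ℝ) (hn : 0 ≤ n) (hx : 0 ≤ x) (hy : 0 ≤ y) (hz : 0 ≤ z)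
    (hsum : x + y + z = n) (hs : 0 ≤ s) (hs9 : s ≤ 1/9)
    (hxle : x ≤ (1/3 - 3*s)*n) :
    x*y*z ≤ (1/27 - 9/4*s^2 - 27/4*s^3)*n^3 := by
  set x₀ : ℝ := (1/3 - 3*s)*n with hx0
  have h1 : y*z ≤ ((n-x)/2)^2 := by nlinarith [sq_nonneg (y - z)]
  have h2 : x*(y*z) ≤ x*((n-x)/2)^2 := mul_le_mul_of_nonneg_left h1 hx
  have hd : 0 ≤ x₀ - x := by linarith
  have hu : 0 ≤ n - 3*x := by nlinarith
  have hv : 0 ≤ n - 3*x₀ := by nlinarith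
  have h3 : x*((n-x)/2)^2 ≤ x₀*((n-x₀)/2)^2 := by
    nlinarith [mul_nonneg hd (mul_nonneg hn hu), mul_nonneg hd (mul_nonneg hn hv),
      mul_nonneg hd (sq_nonneg (n-3*x)), mul_nonneg hd (sq_nonneg (n-3*x₀)),
      mul_nonneg hd (mul_nonneg hu hv)]
  have h4 : x₀*((n-x₀)/2)^2 = (1/27 - 9/4*s^2 - 27/4*s^3)*n^3 := by rw [hx0]; ring
  calc x*y*z = x*(y*z) := by ring
    _ ≤ x*((n-x)/2)^2 := h2
    _ ≤ x₀*((n-x₀)/2)^2 := h3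
    _ = _ := h4

lemma aux_card {α : Type*} [DecidableEq α] [LinearOrder α] (d : α)
    (H : Finset (Finset α)) (V1 V2 V3 : Finset α)
    (hcover : ∀ e ∈ H, e ⊆ V1 ∪ V2 ∪ V3) :
    (H.filter (fun e => (e ∩ V1).card = 1 ∧ (e ∩ V2).card = 1 ∧ (e ∩ V3).card = 1)).card
      ≤ V1.card * V2.card * V3.card := by
  classical
  set pick : Finset α → α := fun s => if h : s.Nonempty then s.min' h else d with hpickdef
  have hpick : ∀ s : Finset α, s.Nonempty → pick s ∈ s := by
    intro s h
    simp only [hpickdef, dif_pos h]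
    exact s.min'_mem h
  have hsingle : ∀ s : Finset α, s.card = 1 → s = {pick s} := by
    intro s hs
    obtain ⟨a, ha⟩ := Finset.card_eq_one.mp hs
    have hmem : pick s ∈ s := hpick s (by simp [ha])
    rw [ha, Finset.mem_singleton] at hmem
    rw [ha, hmem]
  have := Finset.card_le_card_of_injOn
    (f := fun e => (pick (e ∩ V1), pick (e ∩ V2), pick (e ∩ V3)))
    (s := H.filter (fun e => (e ∩ V1).card = 1 ∧ (e ∩ V2).card = 1 ∧ (e ∩ V3).card = 1))
    (t := V1 ×ˢ V2 ×ˢ V3)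
    (by
      intro e he
      simp only [Finset.mem_coe, Finset.mem_filter] at he
      obtain ⟨heH, h1, h2, h3⟩ := he
      have p1 := hpick _ (Finset.card_pos.mp (by omega : 0 < (e ∩ V1).card))
      have p2 := hpick _ (Finset.card_pos.mp (by omega : 0 < (e ∩ V2).card))
      have p3 := hpick _ (Finset.card_pos.mp (by omega : 0 < (e ∩ V3).card))
      simp only [Finset.mem_inter] at p1 p2 p3
      simp [Finset.mem_product, p1.2, p2.2, p3.2])
    (by
      intro e he e' he' heq
      simp only [Finset.mem_coe, Finset.mem_filter] at he he'
      obtain ⟨heH, h1, h2, h3⟩ := he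
      obtain ⟨heH', h1', h2', h3'⟩ := he'
      have hde : e = (e ∩ V1) ∪ (e ∩ V2) ∪ (e ∩ V3) := by
        rw [← Finset.inter_union_distrib_left, ← Finset.inter_union_distrib_left]
        exact (Finset.inter_eq_left.mpr (hcover e heH)).symm
      have hde' : e' = (e' ∩ V1) ∪ (e' ∩ V2) ∪ (e' ∩ V3) := by
        rw [← Finset.inter_union_distrib_left, ← Finset.inter_union_distrib_left]
        exact (Finset.inter_eq_left.mpr (hcover e' heH')).symm
      have q1 : pick (e ∩ V1) = pick (e' ∩ V1) := congrArg Prod.fst heq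
      have q2 : pick (e ∩ V2) = pick (e' ∩ V2) := congrArg (Prod.fst ∘ Prod.snd) heq
      have q3 : pick (e ∩ V3) = pick (e' ∩ V3) := congrArg (Prod.snd ∘ Prod.snd) heq
      rw [hde, hde', hsingle _ h1, hsingle _ h2, hsingle _ h3,
        hsingle _ h1', hsingle _ h2', hsingle _ h3', q1, q2, q3])
  simpa [Finset.card_product, mul_assoc] using this


/-- Stability side-conditions. If a 3-graph `H` on `[n]` with a partition
`(V1,V2,V3)` satisfies `|H \ H_π| ≤ ε n^3` and `|H| ≥ (1/27 − ε) n^3`, then (a) if some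
part has size at most `(1/3 − 3√ε)n`, then `|H| ≤ (1/27 − (5/4)ε − (27/4)ε^{3/2}) n^3`,
and consequently (b) every part `V` satisfies `(1/3 − 3√ε)n < |V| < (1/3 + 6√ε)n`. -/
theorem stmt11 :
    ∃ ε₀ : ℝ, 0 < ε₀ ∧ ∀ ε : ℝ, 0 < ε → ε < ε₀ →
      ∃ N : ℕ, ∀ n : ℕ, N < n →
        ∀ (H : Finset (Finset (Fin n))) (V1 V2 V3 : Finset (Fin n)),
          (∀ e ∈ H, e.card = 3) →
          Disjoint V1 V2 → Disjoint V1 V3 → Disjoint V2 V3 →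
          V1 ∪ V2 ∪ V3 = Finset.univ →
          (((H \ H.filter (fun e =>
              (e ∩ V1).card = 1 ∧ (e ∩ V2).card = 1 ∧ (e ∩ V3).card = 1)).card : ℝ)
            ≤ ε * n ^ 3) →
          (((1 : ℝ) / 27 - ε) * n ^ 3 ≤ (H.card : ℝ)) →
          ((∃ V ∈ [V1, V2, V3], (V.card : ℝ) ≤ ((1 : ℝ) / 3 - 3 * Real.sqrt ε) * n) →
              (H.card : ℝ)
                ≤ ((1 : ℝ) / 27 - 5 / 4 * ε - 27 / 4 * (ε * Real.sqrt ε)) * n ^ 3) ∧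
            (∀ V ∈ [V1, V2, V3],
              ((1 : ℝ) / 3 - 3 * Real.sqrt ε) * n < (V.card : ℝ) ∧
                (V.card : ℝ) < ((1 : ℝ) / 3 + 6 * Real.sqrt ε) * n) := by
  refine ⟨1/81, by norm_num, ?_⟩
  intro ε hε hε81
  refine ⟨0, ?_⟩
  intro n hn H V1 V2 V3 _hcard3 h12 h13 h23 huniv hbad hlower
  set s : ℝ := Real.sqrt ε with hsdef
  have hs0 : 0 ≤ s := Real.sqrt_nonneg ε
  have hs2 : s^2 = ε := Real.sq_sqrt hε.le
  have hs9 : s ≤ 1/9 := by nlinarith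
  have hn0 : (0:ℝ) < n := by exact_mod_cast hn
  have hsum : V1.card + V2.card + V3.card = n := by
    have h : (V1 ∪ V2 ∪ V3).card = n := by rw [huniv]; simp
    rwa [Finset.card_union_of_disjoint (Finset.disjoint_union_left.mpr ⟨h13, h23⟩),
      Finset.card_union_of_disjoint h12] at h
  have hsumR : (V1.card:ℝ) + V2.card + V3.card = n := by exact_mod_cast hsum
  have hcover : ∀ e ∈ H, e ⊆ V1 ∪ V2 ∪ V3 := by
    intro e _; rw [huniv]; exact Finset.subset_univ e
  have hπ := aux_card (⟨0, hn⟩ : Fin n) H V1 V2 V3 hcover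
  have hsplit := (Finset.card_sdiff_add_card_eq_card (Finset.filter_subset
    (fun e => (e ∩ V1).card = 1 ∧ (e ∩ V2).card = 1 ∧ (e ∩ V3).card = 1) H)).symm
  have hHle : (H.card:ℝ) ≤ (V1.card:ℝ)*V2.card*V3.card + ε*n^3 := by
    have h1 : ((H.filter (fun e =>
        (e ∩ V1).card = 1 ∧ (e ∩ V2).card = 1 ∧ (e ∩ V3).card = 1)).card : ℝ)
        ≤ (V1.card:ℝ)*V2.card*V3.card := by exact_mod_cast hπ
    have h2 : (H.card:ℝ) = ((H \ H.filter (fun e =>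
        (e ∩ V1).card = 1 ∧ (e ∩ V2).card = 1 ∧ (e ∩ V3).card = 1)).card : ℝ)
        + ((H.filter (fun e =>
        (e ∩ V1).card = 1 ∧ (e ∩ V2).card = 1 ∧ (e ∩ V3).card = 1)).card : ℝ) := by
      exact_mod_cast hsplit
    linarith
  have parta : (∃ V ∈ [V1, V2, V3], (V.card : ℝ) ≤ ((1:ℝ)/3 - 3*s)*n) →
      (H.card : ℝ) ≤ ((1:ℝ)/27 - 5/4*ε - 27/4*(ε*s))*n^3 := by
    rintro ⟨V, hVmem, hVle⟩
    have hprod : (V1.card:ℝ)*V2.card*V3.card ≤ (1/27 - 9/4*s^2 - 27/4*s^3)*n^3 := by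
      simp only [List.mem_cons, List.not_mem_nil, or_false] at hVmem
      rcases hVmem with h | h | h <;> rw [h] at hVle
      · exact aux_real n V1.card V2.card V3.card s hn0.le (by positivity) (by positivity)
          (by positivity) hsumR hs0 hs9 hVle
      · calc ((V1.card:ℝ))*V2.card*V3.card = (V2.card:ℝ)*V1.card*V3.card := by ring
          _ ≤ _ := aux_real n V2.card V1.card V3.card s hn0.le (by positivity) (by positivity)
            (by positivity) (by linarith) hs0 hs9 hVle
      · calc ((V1.card:ℝ))*V2.card*V3.card = (V3.card:ℝ)*V1.card*V2.card := by ring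
          _ ≤ _ := aux_real n V3.card V1.card V2.card s hn0.le (by positivity) (by positivity)
            (by positivity) (by linarith) hs0 hs9 hVle
    have hcube : s^3 = ε*s := by rw [pow_succ, hs2]
    rw [hs2, hcube] at hprod
    calc (H.card:ℝ) ≤ (V1.card:ℝ)*V2.card*V3.card + ε*n^3 := hHle
      _ ≤ (1/27 - 9/4*ε - 27/4*(ε*s))*n^3 + ε*n^3 := by linarith
      _ = ((1:ℝ)/27 - 5/4*ε - 27/4*(ε*s))*n^3 := by ring
  refine ⟨parta, ?_⟩
  have hn3 : (0:ℝ) < (n:ℝ)^3 := by positivity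
  have hlow : ∀ V ∈ [V1, V2, V3], ((1:ℝ)/3 - 3*s)*n < (V.card:ℝ) := by
    intro V hV
    by_contra hcon
    push_neg at hcon
    have h := parta ⟨V, hV, hcon⟩
    nlinarith [mul_pos hε hn3, mul_nonneg (mul_nonneg hε.le hs0) hn3.le]
  intro V hV
  refine ⟨hlow V hV, ?_⟩
  have l1 := hlow V1 (by simp)
  have l2 := hlow V2 (by simp)
  have l3 := hlow V3 (by simp)
  simp only [List.mem_cons, List.not_mem_nil, or_false] at hV
  rcases hV with h | h | h <;> rw [h] <;> nlinarith [l1, l2, l3]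
end

section
/- Let a_1 ≤ a_2 ≤ a_3 be positive integers with a_1 + a_2 + a_3 = n, a_3 ≥ a_1 + 2, and a_2 ≥ (1/3 − 0.01)·n. Let t ≥ 0 and suppose n is sufficiently large relative to t. If g(a) denotes any function satisfying (t/3)·C(a,2) − a/3 − 4t^2 ≤ g(a) ≤ (t/3)·C(a,2) for all a, then a_1·a_2·a_3 + g(a_1) + g(a_2) + g(a_3) < (a_1+1)·a_2·(a_3−1) + g(a_1+1) + g(a_2) + g(a_3−1). -/
/-- the shifting inequality: moving a vertex from the largest part to the
smallest strictly increases the construction size. -/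
theorem stmt13 (t : ℕ) :
    ∃ N : ℕ, ∀ n : ℕ, N ≤ n → ∀ a1 a2 a3 : ℕ, ∀ g : ℕ → ℝ,
      0 < a1 → a1 ≤ a2 → a2 ≤ a3 → a1 + a2 + a3 = n → a1 + 2 ≤ a3 →
      ((1 : ℝ) / 3 - 0.01) * n ≤ (a2 : ℝ) →
      (∀ a : ℕ,
        (t : ℝ) / 3 * (a.choose 2) - (a : ℝ) / 3 - 4 * (t : ℝ) ^ 2 ≤ g a ∧
          g a ≤ (t : ℝ) / 3 * (a.choose 2)) →
      (a1 : ℝ) * a2 * a3 + g a1 + g a2 + g a3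
        < ((a1 : ℝ) + 1) * a2 * ((a3 : ℝ) - 1) + g (a1 + 1) + g a2 + g (a3 - 1) := by
  refine ⟨100 * (t + 1) ^ 2, ?_⟩
  intro n hn a1 a2 a3 g h1 h12 h23 hsum h13 ha2 hg
  have ha3 : 1 ≤ a3 := by omega
  have h1' := (hg (a1 + 1)).1
  have h2' := (hg a1).2
  have h3' := (hg (a3 - 1)).1
  have h4' := (hg a3).2
  have hc1 : (a1 + 1).choose 2 = a1.choose 2 + a1 := by
    rw [Nat.choose_succ_succ' a1 1, Nat.choose_one_right]
    norm_num [Nat.add_comm]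
  have hc3 : a3.choose 2 = (a3 - 1).choose 2 + (a3 - 1) := by
    have : a3 = (a3 - 1) + 1 := by omega
    rw [this, Nat.choose_succ_succ' (a3 - 1) 1, Nat.choose_one_right]
    norm_num [Nat.add_comm]
  have hcast : ((a3 - 1 : ℕ) : ℝ) = (a3 : ℝ) - 1 := by
    have : (1 : ℕ) ≤ a3 := ha3
    push_cast [Nat.cast_sub this]
    ring
  rw [hc1] at h1'
  rw [hc3] at h4'
  rw [hcast] at h3'
  push_cast at h1' h4' h3' ⊢
  have hnr : (100 : ℝ) * ((t : ℝ) + 1) ^ 2 ≤ (n : ℝ) := by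
    exact_mod_cast Nat.cast_le.mpr hn |>.trans_eq' (by push_cast; ring)
  have hsumr : (a1 : ℝ) + a2 + a3 = n := by exact_mod_cast hsum
  have h13r : (a1 : ℝ) + 2 ≤ a3 := by exact_mod_cast h13
  have ht : (0 : ℝ) ≤ t := Nat.cast_nonneg t
  have ha2t : (t : ℝ) / 3 ≤ a2 := by nlinarith
  nlinarith [mul_nonneg (by linarith : (0:ℝ) ≤ (a3 : ℝ) - a1 - 2) (by linarith : (0:ℝ) ≤ (a2 : ℝ) - (t:ℝ)/3)]
end

section
/- Let t ≥ 0 and let H be an F_5^t-free 3-uniform hypergraph on [n] with a partition (V_1,V_2,V_3). Suppose x ∈ V_1, y ∈ V_2, z ∈ V_3 are such that {x,y,z} ∈ H and there exist t+2 vertices y_1,...,y_{t+1}, y in V_2 with {x,z,y_i} ∈ H for all i and also a vertex x' ∈ V_1 with {x',y,x} ∈ H and {x',y,z} ∈ H. Then H contains a copy of F_5^t, a contradiction; hence for any F_5^t-free H, if {x',y,x}, {x',y,z} ∈ H with x,x' ∈ V_1, y ∈ V_2, z ∈ V_3, then the codegree d_{V_2}(x,z) ≤ t+1. -/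
/-- In an `F_5^t`-free 3-graph with a vertex partition `(V1, V2, V3)`,
if `x, x' ∈ V1`, `y ∈ V2`, `z ∈ V3` and `{x',y,x}, {x',y,z} ∈ H`, then the codegree
`d_{V2}(x,z) ≤ t+1`. -/
theorem stmt14 (n t : ℕ) (H : Finset (Finset (Fin n)))
    (h3 : ∀ e ∈ H, e.card = 3)
    (hfree : ¬ ∃ (a b c d : Fin n) (v : Fin (t + 1) → Fin n),
      ({a, b, c, d} : Finset (Fin n)).card = 4 ∧
      Function.Injective v ∧
      (∀ i, v i ∉ ({a, b, c, d} : Finset (Fin n))) ∧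
      ({a, b, c} : Finset (Fin n)) ∈ H ∧ ({a, b, d} : Finset (Fin n)) ∈ H ∧
      (∀ i, ({c, d, v i} : Finset (Fin n)) ∈ H))
    (V1 V2 V3 : Finset (Fin n))
    (h12 : Disjoint V1 V2) (h13 : Disjoint V1 V3) (h23 : Disjoint V2 V3)
    (hcover : V1 ∪ V2 ∪ V3 = Finset.univ)
    (x x' y z : Fin n)
    (hx : x ∈ V1) (hx' : x' ∈ V1) (hy : y ∈ V2) (hz : z ∈ V3)
    (he1 : ({x', y, x} : Finset (Fin n)) ∈ H)
    (he2 : ({x', y, z} : Finset (Fin n)) ∈ H) :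
    (V2.filter (fun w => ({x, z, w} : Finset (Fin n)) ∈ H)).card ≤ t + 1 := by
  by_contra hlt
  push_neg at hlt
  -- distinctness facts
  have hxy : x ≠ y := fun h => (Finset.disjoint_left.mp h12) hx (h ▸ hy)
  have hx'y : x' ≠ y := fun h => (Finset.disjoint_left.mp h12) hx' (h ▸ hy)
  have hxz : x ≠ z := fun h => (Finset.disjoint_left.mp h13) hx (h ▸ hz)
  have hx'z : x' ≠ z := fun h => (Finset.disjoint_left.mp h13) hx' (h ▸ hz)
  have hyz : y ≠ z := fun h => (Finset.disjoint_left.mp h23) hy (h ▸ hz)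
  have hc1 := h3 _ he1
  have hx'x : x' ≠ x := by
    intro h
    rw [h] at hc1
    rw [show ({x, y, x} : Finset (Fin n)) = {x, y} from by ext a; simp; tauto] at hc1
    rw [Finset.card_insert_of_notMem (by simp [hxy]), Finset.card_singleton] at hc1
    omega
  -- the set of common neighbors minus y
  set S := (V2.filter (fun w => ({x, z, w} : Finset (Fin n)) ∈ H)) with hS
  have hT : t + 1 ≤ (S.erase y).card := by
    have h2 := Finset.pred_card_le_card_erase (a := y) (s := S)
    omega
  obtain ⟨T', hT'sub, hT'card⟩ := Finset.exists_subset_card_eq hT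
  obtain ⟨v, hvinj, hvmem⟩ : ∃ v : Fin (t + 1) → Fin n,
      Function.Injective v ∧ ∀ i, v i ∈ T' := by
    refine ⟨fun i => ((Finset.equivFinOfCardEq hT'card).symm i : Fin n), ?_, ?_⟩
    · intro i j h
      exact (Finset.equivFinOfCardEq hT'card).symm.injective (Subtype.ext h)
    · intro i; exact ((Finset.equivFinOfCardEq hT'card).symm i).2
  apply hfree
  refine ⟨x', y, x, z, v, ?_, hvinj, ?_, he1, he2, ?_⟩
  · rw [Finset.card_insert_of_notMem (by
        simp only [Finset.mem_insert, Finset.mem_singleton]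
        push_neg; exact ⟨hx'y, hx'x, hx'z⟩),
      Finset.card_insert_of_notMem (by
        simp only [Finset.mem_insert, Finset.mem_singleton]
        push_neg; exact ⟨Ne.symm hxy, hyz⟩),
      Finset.card_insert_of_notMem (by simp [hxz]), Finset.card_singleton]
  · intro i
    have hm' := hT'sub (hvmem i)
    have hne : v i ≠ y := Finset.ne_of_mem_erase hm'
    have hV2 : v i ∈ V2 := (Finset.mem_filter.mp (Finset.mem_of_mem_erase hm')).1
    simp only [Finset.mem_insert, Finset.mem_singleton]
    push_neg
    refine ⟨?_, hne, ?_, ?_⟩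
    · intro h; exact (Finset.disjoint_left.mp h12) hx' (h ▸ hV2)
    · intro h; exact (Finset.disjoint_left.mp h12) hx (h ▸ hV2)
    · intro h; exact (Finset.disjoint_right.mp h23) hz (h ▸ hV2)
  · intro i
    exact (Finset.mem_filter.mp (Finset.mem_of_mem_erase (hT'sub (hvmem i)))).2
end
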